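/- Let Q be a subset of a metric space Ω having Nagata dimension β − 1 in Ω, let Σ be a finite sample of points in Ω with no distance ties, and let x ∈ Ω. Then the number of points x_i ∈ Σ ∩ Q for which x is among the k nearest neighbors of x_i (within the sample Σ ∪ {x}) is at most (k+1)β. -/

import Mathlib

/-- `Q` has Nagata dimension `β - 1` in `Ω` (written here with `β + 1` points). -/
def HasNagataDimLE {Ω : Type*} [MetricSpace Ω] (Q : Set Ω) (β : ℕ) : Prop :=
  ∀ x : Fin (β + 1) → Ω, (∀ i, x i ∈ Q) → ∀ a : Ω,
    ∃ i j, i ≠ j ∧ dist (x i) (x j) ≤ max (dist a (x i)) (dist a (x j))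

theorem stmt15 {Ω : Type*} [MetricSpace Ω] [DecidableEq Ω] (Q : Set Ω) (β k : ℕ)
    (hQ : HasNagataDimLE Q β)
    (Sn : Finset Ω) (x : Ω) (hx : x ∉ Sn)
    (hties : ∀ y ∈ insert x Sn, ∀ z ∈ insert x Sn, ∀ w ∈ insert x Sn,
      dist y z = dist y w → z = w) :
    Set.ncard {xi : Ω | xi ∈ Sn ∧ xi ∈ Q ∧
        ((Sn.erase xi).filter (fun z => dist xi z < dist xi x)).card < k} ≤
      (k + 1) * β := by
  classical
  -- any pairwise "unconnected" list of points of Q has length ≤ β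
  have hlen : ∀ L : List Ω, (∀ c ∈ L, c ∈ Q) →
      L.Pairwise (fun a b => max (dist x a) (dist x b) < dist a b) →
      L.length ≤ β := by
    intro L hLQ hLP
    by_contra hc
    push_neg at hc
    have hc' : β + 1 ≤ L.length := hc
    set f : Fin (β + 1) → Ω := fun i => L.get ⟨i, lt_of_lt_of_le i.isLt hc'⟩ with hf
    obtain ⟨i, j, hij, hle⟩ := hQ f (fun i => hLQ _ (L.get_mem _)) x
    have hpair := List.pairwise_iff_get.mp hLP
    rcases lt_or_gt_of_ne (fun h : (i : ℕ) = (j : ℕ) => hij (Fin.ext h)) with h | h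
    · have := hpair ⟨i, lt_of_lt_of_le i.isLt hc'⟩ ⟨j, lt_of_lt_of_le j.isLt hc'⟩ h
      have : max (dist x (f i)) (dist x (f j)) < dist (f i) (f j) := this
      linarith [hle]
    · have := hpair ⟨j, lt_of_lt_of_le j.isLt hc'⟩ ⟨i, lt_of_lt_of_le i.isLt hc'⟩ h
      have h2 : max (dist x (f j)) (dist x (f i)) < dist (f j) (f i) := this
      rw [dist_comm (f j) (f i), max_comm] at h2
      linarith [hle]
  -- the key greedy induction
  have key : ∀ n (T : Finset Ω) (L : List Ω),
      T.card ≤ n →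
      (∀ y ∈ T, y ∈ Sn ∧ y ∈ Q ∧
        ((Sn.erase y).filter (fun z => dist y z < dist y x)).card < k) →
      (∀ c ∈ L, c ∈ Q) →
      L.Pairwise (fun a b => max (dist x a) (dist x b) < dist a b) →
      (∀ c ∈ L, ∀ y ∈ T, dist x y ≤ dist x c ∧ dist x c < dist c y) →
      T.card + k * L.length ≤ k * β := by
    intro n
    induction n with
    | zero =>
      intro T L hT hTS hLQ hLP hLT
      have hT0 : T.card = 0 := Nat.le_zero.mp hT
      have := hlen L hLQ hLP
      calc T.card + k * L.length = k * L.length := by omega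
        _ ≤ k * β := Nat.mul_le_mul_left k this
    | succ n ih =>
      intro T L hT hTS hLQ hLP hLT
      rcases T.eq_empty_or_nonempty with rfl | hTne
      · have := hlen L hLQ hLP
        simpa using Nat.mul_le_mul_left k this
      · -- pick the point of T farthest from x
        obtain ⟨y, hyT, hymax⟩ := T.exists_max_image (fun y => dist x y) hTne
        obtain ⟨hySn, hyQ, hyk⟩ := hTS y hyT
        -- points of T inside the ball around y
        set D : Finset Ω := T.filter (fun z => dist y z ≤ dist y x) with hD
        have hyD : y ∈ D := by
          simp [hD, hyT, dist_nonneg]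
        have hDT : D ⊆ T := Finset.filter_subset _ _
        -- D has at most k points
        have hDk : D.card ≤ k := by
          have hsub : D ⊆ insert y ((Sn.erase y).filter
              (fun z => dist y z < dist y x)) := by
            intro z hz
            rw [hD, Finset.mem_filter] at hz
            obtain ⟨hzT, hzle⟩ := hz
            by_cases hzy : z = y
            · simp [hzy]
            · have hzSn : z ∈ Sn := (hTS z hzT).1
              have hne : dist y z ≠ dist y x := by
                intro heq
                have := hties y (Finset.mem_insert_of_mem hySn)
                  z (Finset.mem_insert_of_mem hzSn) x (Finset.mem_insert_self x Sn) heq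
                exact hx (this ▸ hzSn)
              refine Finset.mem_insert_of_mem ?_
              rw [Finset.mem_filter]
              exact ⟨Finset.mem_erase.mpr ⟨hzy, hzSn⟩, lt_of_le_of_ne hzle hne⟩
          calc D.card ≤ (insert y ((Sn.erase y).filter
                (fun z => dist y z < dist y x))).card := Finset.card_le_card hsub
            _ ≤ ((Sn.erase y).filter (fun z => dist y z < dist y x)).card + 1 :=
                Finset.card_insert_le _ _
            _ ≤ k := by omega
        set T' : Finset Ω := T \ D with hT'
        have hT'card : T'.card + D.card = T.card := Finset.card_sdiff_add_card_eq_card hDT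
        have hDpos : 0 < D.card := Finset.card_pos.mpr ⟨y, hyD⟩
        have hT'n : T'.card ≤ n := by omega
        have hrec := ih T' (y :: L) hT'n
          (fun z hz => hTS z (Finset.mem_sdiff.mp hz).1)
          (by
            intro c hc
            rcases List.mem_cons.mp hc with rfl | hc
            · exact hyQ
            · exact hLQ c hc)
          (by
            rw [List.pairwise_cons]
            refine ⟨fun c hc => ?_, hLP⟩
            obtain ⟨h1, h2⟩ := hLT c hc y hyT
            have : max (dist x y) (dist x c) = dist x c := max_eq_right h1
            rw [this, dist_comm y c]
            exact h2)
          (by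
            intro c hc z hz
            obtain ⟨hzT, hzD⟩ := Finset.mem_sdiff.mp hz
            rcases List.mem_cons.mp hc with hceq | hc
            · subst hceq
              refine ⟨hymax z hzT, ?_⟩
              have hnot : ¬ dist c z ≤ dist c x := by
                intro h
                exact hzD (by simp [hD, hzT, h])
              rw [dist_comm x c]
              linarith [lt_of_not_ge hnot]
            · exact hLT c hc z hzT)
        simp only [List.length_cons] at hrec
        have : k * (L.length + 1) = k * L.length + k := by ring
        omega
  -- identify the set with a finset
  have hset : {xi : Ω | xi ∈ Sn ∧ xi ∈ Q ∧
      ((Sn.erase xi).filter (fun z => dist xi z < dist xi x)).card < k} =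
      ↑(Sn.filter (fun xi => xi ∈ Q ∧
        ((Sn.erase xi).filter (fun z => dist xi z < dist xi x)).card < k)) := by
    ext xi
    simp [and_assoc]
  rw [hset, Set.ncard_coe_finset]
  have hS := key (Sn.filter (fun xi => xi ∈ Q ∧
      ((Sn.erase xi).filter (fun z => dist xi z < dist xi x)).card < k)).card
    (Sn.filter (fun xi => xi ∈ Q ∧
      ((Sn.erase xi).filter (fun z => dist xi z < dist xi x)).card < k)) []
    le_rfl
    (by
      intro y hy
      rw [Finset.mem_filter] at hy
      exact ⟨hy.1, hy.2.1, hy.2.2⟩)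
    (by simp) (by simp) (by simp)
  simp only [List.length_nil, Nat.mul_zero, Nat.add_zero] at hS
  calc _ ≤ k * β := hS
    _ ≤ (k + 1) * β := Nat.mul_le_mul_right β (Nat.le_succ k)
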